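/- arXiv:1704.01862 — 2 statements merged into one kernel-verified Lean document; each statement's English description precedes it below -/
import Mathlib

section
/- Let 0 < ε ≤ 1/2, let X ⊆ ℝ^d be finite and (k,ε)-irreducible with optimal k-means partition X₁,…,X_k, let 1 ≤ i < k, and let C_i be a set of i centers satisfying the invariant P(i). Let S consist of N = ⌈2¹²·k³/ε²⌉ independent D²-samples from X w.r.t. C_i. Then Pr[ there exists j ∈ J such that S contains no point of Y_j ] ≤ 1/(4k). -/
open Finset
open scoped BigOperators
open Classical

noncomputable section

/-- Points of `ℝ^d`. -/
abbrev Pt (d : ℕ) := EuclideanSpace ℝ (Fin d)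

/-- `Φ(C, X) = Σ_{x ∈ X} min_{c ∈ C} ‖x - c‖²`. -/
noncomputable def Phi {d : ℕ} (C X : Finset (Pt d)) : ℝ :=
  ∑ x ∈ X, sInf ((fun c => ‖x - c‖ ^ 2) '' (C : Set (Pt d)))

/-- The centroid `μ(X)` of a finite set of points. -/
noncomputable def ctr {d : ℕ} (X : Finset (Pt d)) : Pt d :=
  (X.card : ℝ)⁻¹ • ∑ x ∈ X, x

/-- `Δ₁(X) = Φ({μ(X)}, X)`. -/
noncomputable def Delta1 {d : ℕ} (X : Finset (Pt d)) : ℝ := Phi {ctr X} X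

/-- `Δ_k(X)`: the optimal `k`-means cost of `X`. -/
noncomputable def DeltaK {d : ℕ} (k : ℕ) (X : Finset (Pt d)) : ℝ :=
  sInf ((fun C => Phi C X) '' {C : Finset (Pt d) | C.card = k})

/-- `X₁, …, X_k` is an optimal `k`-means partition of `X`. -/
def IsOptPartition {d : ℕ} (k : ℕ) (X : Finset (Pt d)) (Xs : Fin k → Finset (Pt d)) : Prop :=
  (∀ j, (Xs j).Nonempty) ∧
  (∀ j l, j ≠ l → Disjoint (Xs j) (Xs l)) ∧
  Finset.univ.biUnion Xs = X ∧
  ∑ j, Delta1 (Xs j) = DeltaK k X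

/-- `X` is `(k, ε)`-irreducible: `Δ_{k-1}(X) ≥ (1+ε)·Δ_k(X)`. -/
def KIrreducible {d : ℕ} (k : ℕ) (ε : ℝ) (X : Finset (Pt d)) : Prop :=
  (1 + ε) * DeltaK k X ≤ DeltaK (k - 1) X

/-- The invariant `P(i)`: `Ci` consists of the centers `c r` for `r < i` (clusters reindexed
so that the covered clusters come first), each `c r` is a `(1 + ε/16)`-good center for the
optimal cluster `Xs r`, and `Φ(Ci, X) > 0`. -/
def InvariantP {d k : ℕ} (ε : ℝ) (X : Finset (Pt d)) (Xs : Fin k → Finset (Pt d))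
    (i : ℕ) (c : Fin k → Pt d) (Ci : Finset (Pt d)) : Prop :=
  Ci = Finset.image c (Finset.univ.filter (fun r : Fin k => r.val < i)) ∧
  (∀ r : Fin k, r.val < i → Phi {c r} (Xs r) ≤ (1 + ε / 16) * Delta1 (Xs r)) ∧
  0 < Phi Ci X


variable {d : ℕ}

lemma Phi_pt_nonneg (C : Finset (Pt d)) (x : Pt d) :
    0 ≤ sInf ((fun c => ‖x - c‖ ^ 2) '' (C : Set (Pt d))) := by
  apply Real.sInf_nonneg
  rintro y ⟨c, -, rfl⟩; positivity

lemma Phi_nonneg (C X : Finset (Pt d)) : 0 ≤ Phi C X :=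
  Finset.sum_nonneg fun x _ => Phi_pt_nonneg C x

lemma Phi_singleton_pt (C : Finset (Pt d)) (x : Pt d) :
    Phi C {x} = sInf ((fun c => ‖x - c‖ ^ 2) '' (C : Set (Pt d))) := by
  simp [Phi]

lemma Phi_eq_sum_pts (C X : Finset (Pt d)) : Phi C X = ∑ x ∈ X, Phi C {x} := by
  simp [Phi]

lemma Phi_pt_le {C : Finset (Pt d)} {c : Pt d} (hc : c ∈ C) (x : Pt d) :
    Phi C {x} ≤ ‖x - c‖ ^ 2 := by
  rw [Phi_singleton_pt]
  exact csInf_le ⟨0, by rintro y ⟨c', -, rfl⟩; positivity⟩ ⟨c, by simpa using hc, rfl⟩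

lemma Phi_singleton_center (c : Pt d) (X : Finset (Pt d)) :
    Phi {c} X = ∑ x ∈ X, ‖x - c‖ ^ 2 := by
  unfold Phi
  congr 1; ext x
  simp

lemma Phi_le_center {C : Finset (Pt d)} {c : Pt d} (hc : c ∈ C) (X : Finset (Pt d)) :
    Phi C X ≤ Phi {c} X := by
  rw [Phi_eq_sum_pts, Phi_singleton_center]
  exact Finset.sum_le_sum fun x _ => Phi_pt_le hc x

lemma Phi_anti {C C' : Finset (Pt d)} (hC : C.Nonempty) (h : C ⊆ C') (X : Finset (Pt d)) :
    Phi C' X ≤ Phi C X := by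
  unfold Phi
  refine Finset.sum_le_sum fun x _ => ?_
  apply csInf_le_csInf ⟨0, by rintro y ⟨c', -, rfl⟩; positivity⟩
  · exact (hC.to_set.image _)
  · exact Set.image_mono (by exact_mod_cast h)

lemma Phi_exists_min {C : Finset (Pt d)} (hC : C.Nonempty) (x : Pt d) :
    ∃ c ∈ C, Phi C {x} = ‖x - c‖ ^ 2 := by
  have hfin : ((fun c => ‖x - c‖ ^ 2) '' (C : Set (Pt d))).Finite :=
    (C.finite_toSet).image _
  have hne : ((fun c => ‖x - c‖ ^ 2) '' (C : Set (Pt d))).Nonempty :=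
    (hC.to_set).image _
  have := hne.csInf_mem hfin
  rw [Phi_singleton_pt]
  rcases this with ⟨c, hc, hval⟩
  exact ⟨c, by exact_mod_cast hc, hval.symm⟩

lemma ctr_sum {X : Finset (Pt d)} (hX : X.Nonempty) :
    ∑ x ∈ X, (x - ctr X) = 0 := by
  have hc : (X.card : ℝ) ≠ 0 := by
    exact_mod_cast hX.card_pos.ne'
  rw [Finset.sum_sub_distrib, Finset.sum_const, ctr, ← Nat.cast_smul_eq_nsmul ℝ,
    smul_smul, mul_inv_cancel₀ hc, one_smul, sub_self]

/-- Bias–variance: `Φ({c},X) = Δ₁(X) + |X|·‖μ−c‖²`. -/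
lemma Phi_center_eq {X : Finset (Pt d)} (hX : X.Nonempty) (c : Pt d) :
    Phi {c} X = Delta1 X + (X.card : ℝ) * ‖ctr X - c‖ ^ 2 := by
  rw [Phi_singleton_center, Delta1, Phi_singleton_center]
  have key : ∀ x : Pt d, ‖x - c‖ ^ 2
      = ‖x - ctr X‖ ^ 2 + 2 * (inner ℝ (x - ctr X) (ctr X - c) : ℝ) + ‖ctr X - c‖ ^ 2 := by
    intro x
    have : x - c = (x - ctr X) + (ctr X - c) := by abel
    rw [this, norm_add_sq_real]
  calc ∑ x ∈ X, ‖x - c‖ ^ 2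
      = ∑ x ∈ X, (‖x - ctr X‖ ^ 2 + 2 * (inner ℝ (x - ctr X) (ctr X - c) : ℝ)
          + ‖ctr X - c‖ ^ 2) := by
        exact Finset.sum_congr rfl fun x _ => key x
    _ = (∑ x ∈ X, ‖x - ctr X‖ ^ 2) + 2 * (inner ℝ (∑ x ∈ X, (x - ctr X)) (ctr X - c) : ℝ)
          + (X.card : ℝ) * ‖ctr X - c‖ ^ 2 := by
        rw [Finset.sum_add_distrib, Finset.sum_add_distrib, sum_inner, Finset.sum_const,
          ← Finset.mul_sum, nsmul_eq_mul]
    _ = _ := by rw [ctr_sum hX]; simp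

lemma Delta1_nonneg (X : Finset (Pt d)) : 0 ≤ Delta1 X := Phi_nonneg _ _

lemma Delta1_le_Phi_center {X : Finset (Pt d)} (hX : X.Nonempty) (c : Pt d) :
    Delta1 X ≤ Phi {c} X := by
  rw [Phi_center_eq hX c]
  have : 0 ≤ (X.card : ℝ) * ‖ctr X - c‖ ^ 2 := by positivity
  linarith

lemma ctr_singleton (y : Pt d) : ctr ({y} : Finset (Pt d)) = y := by
  simp [ctr]

lemma pt_infinite (hd : 1 ≤ d) : Infinite (Pt d) := by
  have : Nontrivial (Pt d) := by
    refine ⟨0, EuclideanSpace.single ⟨0, hd⟩ 1, ?_⟩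
    intro h
    have := congrArg (fun f => f ⟨0, hd⟩) h
    simp [EuclideanSpace.single_apply] at this
  exact Module.Free.infinite ℝ (Pt d)

/-- `DeltaK n X ≤ Phi C X` for any nonempty `C` with at most `n` elements. -/
lemma DeltaK_le {C : Finset (Pt d)} (hd : 1 ≤ d) (hC : C.Nonempty) {n : ℕ}
    (hcard : C.card ≤ n) (X : Finset (Pt d)) : DeltaK n X ≤ Phi C X := by
  have : Infinite (Pt d) := pt_infinite hd
  obtain ⟨C', hsub, hcard'⟩ := Infinite.exists_superset_card_eq C n hcard
  refine le_trans (csInf_le ?_ ?_) (Phi_anti hC hsub X)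
  · exact ⟨0, by rintro y ⟨D, -, rfl⟩; exact Phi_nonneg D X⟩
  · exact ⟨C', hcard', rfl⟩

lemma DeltaK_le_partition (hd : 1 ≤ d) {n : ℕ} (hn : 0 < n) {X : Finset (Pt d)}
    (P : Fin n → Finset (Pt d)) (hdisj : ∀ a b, a ≠ b → Disjoint (P a) (P b))
    (hunion : Finset.univ.biUnion P = X) :
    DeltaK n X ≤ ∑ l, Delta1 (P l) := by
  have hne : Nonempty (Fin n) := ⟨⟨0, hn⟩⟩
  set C := Finset.image (fun l => ctr (P l)) Finset.univ with hC
  have hCne : C.Nonempty := by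
    refine ⟨ctr (P (Classical.arbitrary (Fin n))), ?_⟩
    exact Finset.mem_image_of_mem _ (Finset.mem_univ _)
  have hcard : C.card ≤ n := le_trans Finset.card_image_le (by simp)
  refine le_trans (DeltaK_le hd hCne hcard X) ?_
  have hsplit : Phi C X = ∑ l, Phi C (P l) := by
    rw [← hunion, Phi]
    rw [Finset.sum_biUnion (fun a _ b _ hab => hdisj a b hab)]
    rfl
  rw [hsplit]
  refine Finset.sum_le_sum fun l _ => ?_
  exact le_trans (Phi_le_center (Finset.mem_image_of_mem _ (Finset.mem_univ l)) _) le_rfl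

/-- Swap/Voronoi property of an optimal partition: every point is at least as close to its
own cluster's centroid as to any other cluster's centroid. -/
lemma swap_lemma (hd : 1 ≤ d) {k : ℕ} {X : Finset (Pt d)} {Xs : Fin k → Finset (Pt d)}
    (hopt : IsOptPartition k X Xs) {j r : Fin k} (hjr : j ≠ r) {y : Pt d} (hy : y ∈ Xs j) :
    ‖y - ctr (Xs j)‖ ≤ ‖y - ctr (Xs r)‖ := by
  obtain ⟨hne, hdisj, hunion, hsum⟩ := hopt
  have hk : 0 < k := j.pos
  have hynr : ∀ l, l ≠ j → y ∉ Xs l := by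
    intro l hl hyl
    exact (Finset.disjoint_left.1 (hdisj j l (Ne.symm hl)) hy) hyl
  by_cases hsing : ((Xs j).erase y).Nonempty
  · -- main case
    set P : Fin k → Finset (Pt d) := fun l =>
      if l = j then (Xs j).erase y else if l = r then insert y (Xs r) else Xs l with hP
    have memP : ∀ {x : Pt d} {l : Fin k}, x ∈ P l → (x ∈ Xs l ∨ (l = r ∧ x = y)) := by
      intro x l hx
      by_cases h1 : l = j
      · subst h1; simp only [hP, if_pos rfl] at hx
        exact Or.inl (Finset.mem_of_mem_erase hx)
      · by_cases h2 : l = r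
        · subst h2; simp only [hP, if_neg h1, if_pos rfl] at hx
          rcases Finset.mem_insert.1 hx with h | h
          · exact Or.inr ⟨rfl, h⟩
          · exact Or.inl h
        · simp only [hP, if_neg h1, if_neg h2] at hx; exact Or.inl hx
    have yP : ∀ {l : Fin k}, y ∈ P l → l = r := by
      intro l hl
      by_cases h1 : l = j
      · subst h1; simp only [hP, if_pos rfl] at hl
        exact absurd hl (Finset.notMem_erase _ _)
      · by_cases h2 : l = r
        · exact h2
        · simp only [hP, if_neg h1, if_neg h2] at hl
          exact absurd hl (hynr l h1)
    have hdisjP : ∀ a b, a ≠ b → Disjoint (P a) (P b) := by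
      intro a b hab
      rw [Finset.disjoint_left]
      intro x hxa hxb
      by_cases hxy : x = y
      · subst hxy; exact hab ((yP hxa).trans (yP hxb).symm)
      · rcases memP hxa with h | ⟨-, h⟩
        · rcases memP hxb with h' | ⟨-, h'⟩
          · exact Finset.disjoint_left.1 (hdisj a b hab) h h'
          · exact hxy h'
        · exact hxy h
    have hunionP : Finset.univ.biUnion P = X := by
      ext x
      simp only [Finset.mem_biUnion, Finset.mem_univ, true_and]
      constructor
      · rintro ⟨l, hl⟩
        rcases memP hl with h | ⟨-, h⟩
        · rw [← hunion]; exact Finset.mem_biUnion.2 ⟨l, Finset.mem_univ l, h⟩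
        · subst h; rw [← hunion]; exact Finset.mem_biUnion.2 ⟨j, Finset.mem_univ j, hy⟩
      · intro hx
        rw [← hunion] at hx
        obtain ⟨l, -, hl⟩ := Finset.mem_biUnion.1 hx
        by_cases hxy : x = y
        · subst hxy
          exact ⟨r, by simp [hP, if_neg (Ne.symm hjr), Finset.mem_insert_self]⟩
        · refine ⟨l, ?_⟩
          by_cases h1 : l = j
          · subst h1; simp [hP, Finset.mem_erase, hxy, hl]
          · by_cases h2 : l = r
            · subst h2; simp [hP, if_neg h1, Finset.mem_insert, hl]
            · simpa [hP, if_neg h1, if_neg h2] using hl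
    have hyr : y ∉ Xs r := hynr r (fun h => hjr h.symm)
    -- cost comparison
    have hjbound : Delta1 (P j) ≤ Delta1 (Xs j) - ‖y - ctr (Xs j)‖ ^ 2 := by
      have h1 : Delta1 (P j) ≤ Phi {ctr (Xs j)} (P j) := by
        simp only [hP, if_pos rfl]
        exact Delta1_le_Phi_center hsing _
      have h2 : Phi {ctr (Xs j)} (P j) = Delta1 (Xs j) - ‖y - ctr (Xs j)‖ ^ 2 := by
        simp only [hP, if_pos rfl, Delta1, Phi_singleton_center]
        rw [← Finset.sum_erase_add _ _ hy]
        ring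
      linarith
    have hrbound : Delta1 (P r) ≤ Delta1 (Xs r) + ‖y - ctr (Xs r)‖ ^ 2 := by
      have h1 : Delta1 (P r) ≤ Phi {ctr (Xs r)} (P r) := by
        have : (P r).Nonempty := by
          simp only [hP, if_neg (Ne.symm hjr), if_pos rfl]
          exact Finset.insert_nonempty _ _
        exact Delta1_le_Phi_center this _
      have h2 : Phi {ctr (Xs r)} (P r) = Delta1 (Xs r) + ‖y - ctr (Xs r)‖ ^ 2 := by
        simp only [hP, if_neg (Ne.symm hjr), if_pos rfl, if_true, Delta1, Phi_singleton_center]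
        rw [Finset.sum_insert hyr]
        ring
      linarith
    have hothers : ∀ l, l ≠ j → l ≠ r → Delta1 (P l) = Delta1 (Xs l) := by
      intro l h1 h2; simp [hP, if_neg h1, if_neg h2]
    -- compare sums
    have hopt' : DeltaK k X ≤ ∑ l, Delta1 (P l) := DeltaK_le_partition hd hk P hdisjP hunionP
    rw [← hsum] at hopt'
    have key : ∑ l, Delta1 (P l) ≤ (∑ l, Delta1 (Xs l)) - ‖y - ctr (Xs j)‖ ^ 2
        + ‖y - ctr (Xs r)‖ ^ 2 := by
      have hsum_le : ∑ l, Delta1 (P l) ≤ ∑ l, (Delta1 (Xs l) +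
          ((if l = j then -(‖y - ctr (Xs j)‖ ^ 2) else 0)
            + (if l = r then ‖y - ctr (Xs r)‖ ^ 2 else 0))) := by
        refine Finset.sum_le_sum fun l _ => ?_
        by_cases h1 : l = j
        · subst h1; rw [if_pos rfl, if_neg hjr]; linarith [hjbound]
        · by_cases h2 : l = r
          · subst h2; rw [if_neg h1, if_pos rfl]; linarith [hrbound]
          · rw [if_neg h1, if_neg h2, hothers l h1 h2]; simp
      calc ∑ l, Delta1 (P l) ≤ _ := hsum_le
        _ = (∑ l, Delta1 (Xs l)) - ‖y - ctr (Xs j)‖ ^ 2 + ‖y - ctr (Xs r)‖ ^ 2 := by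
            rw [Finset.sum_add_distrib, Finset.sum_add_distrib]
            simp [Finset.sum_ite_eq']
            ring
    have hsq : ‖y - ctr (Xs j)‖ ^ 2 ≤ ‖y - ctr (Xs r)‖ ^ 2 := by linarith
    exact (pow_le_pow_iff_left₀ (norm_nonneg _) (norm_nonneg _) (by norm_num)).1 hsq
  · -- Xs j = {y}
    have : Xs j = {y} := by
      refine Finset.eq_singleton_iff_unique_mem.2 ⟨hy, fun z hz => ?_⟩
      by_contra hzy
      exact hsing ⟨z, Finset.mem_erase.2 ⟨hzy, hz⟩⟩
    rw [this, ctr_singleton]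
    simp

/-- Irreducibility merge bound: `ε·Δ₁(X_r) ≤ m_r·‖μ_r − μ_j‖²`. -/
lemma merge_bound (hd : 1 ≤ d) {k : ℕ} {ε : ℝ} (hε0 : 0 < ε) {X : Finset (Pt d)}
    (hirr : KIrreducible k ε X) {Xs : Fin k → Finset (Pt d)}
    (hopt : IsOptPartition k X Xs) {j r : Fin k} (hjr : j ≠ r) :
    ε * Delta1 (Xs r) ≤ ((Xs r).card : ℝ) * ‖ctr (Xs r) - ctr (Xs j)‖ ^ 2 := by
  obtain ⟨hne, hdisj, hunion, hsum⟩ := hopt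
  set C : Finset (Pt d) := Finset.image (fun l => ctr (Xs l)) (Finset.univ.erase r) with hC
  have hjmem : ctr (Xs j) ∈ C :=
    Finset.mem_image_of_mem _ (Finset.mem_erase.2 ⟨hjr, Finset.mem_univ j⟩)
  have hCne : C.Nonempty := ⟨_, hjmem⟩
  have hcard : C.card ≤ k - 1 := by
    refine le_trans Finset.card_image_le ?_
    rw [Finset.card_erase_of_mem (Finset.mem_univ r)]
    simp
  have hDle : DeltaK (k - 1) X ≤ Phi C X := DeltaK_le hd hCne hcard X
  have hsplit : Phi C X = ∑ l, Phi C (Xs l) := by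
    rw [← hunion, Phi, Finset.sum_biUnion (fun a _ b _ hab => hdisj a b hab)]
    rfl
  have hbound : Phi C X ≤ (∑ l, Delta1 (Xs l)) +
      ((Xs r).card : ℝ) * ‖ctr (Xs r) - ctr (Xs j)‖ ^ 2 := by
    rw [hsplit]
    have step : ∀ l, Phi C (Xs l) ≤ Delta1 (Xs l) +
        (if l = r then ((Xs r).card : ℝ) * ‖ctr (Xs r) - ctr (Xs j)‖ ^ 2 else 0) := by
      intro l
      by_cases hl : l = r
      · subst hl
        rw [if_pos rfl]
        calc Phi C (Xs l) ≤ Phi {ctr (Xs j)} (Xs l) := Phi_le_center hjmem _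
          _ = Delta1 (Xs l) + ((Xs l).card : ℝ) * ‖ctr (Xs l) - ctr (Xs j)‖ ^ 2 :=
            Phi_center_eq (hne l) _
      · rw [if_neg hl, add_zero]
        have : ctr (Xs l) ∈ C :=
          Finset.mem_image_of_mem _ (Finset.mem_erase.2 ⟨hl, Finset.mem_univ l⟩)
        exact Phi_le_center this _
    calc ∑ l, Phi C (Xs l) ≤ ∑ l, (Delta1 (Xs l) +
        (if l = r then ((Xs r).card : ℝ) * ‖ctr (Xs r) - ctr (Xs j)‖ ^ 2 else 0)) :=
          Finset.sum_le_sum fun l _ => step l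
      _ = _ := by rw [Finset.sum_add_distrib, Finset.sum_ite_eq' Finset.univ r]; simp
  have h1 : (1 + ε) * DeltaK k X ≤ DeltaK (k - 1) X := hirr
  have hDk : DeltaK k X = ∑ l, Delta1 (Xs l) := hsum.symm
  have hDr : Delta1 (Xs r) ≤ DeltaK k X := by
    rw [hDk]
    exact Finset.single_le_sum (fun l _ => Delta1_nonneg (Xs l)) (Finset.mem_univ r)
  have hDk0 : 0 ≤ DeltaK k X := by
    rw [hDk]; exact Finset.sum_nonneg fun l _ => Delta1_nonneg _
  nlinarith [hDle, hbound, h1, hDr, hDk0, hDk]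

section Key

variable {k : ℕ} {ε : ℝ} {X : Finset (Pt d)} {Xs : Fin k → Finset (Pt d)}
  {i : ℕ} {c : Fin k → Pt d} {Ci : Finset (Pt d)}

lemma Ci_nonempty (hinv : InvariantP ε X Xs i c Ci) (hi : 1 ≤ i) (hik : i < k) :
    Ci.Nonempty := by
  obtain ⟨hCi, -, -⟩ := hinv
  refine ⟨c ⟨0, lt_trans (lt_of_lt_of_le Nat.zero_lt_one hi) hik⟩, ?_⟩
  rw [hCi]
  exact Finset.mem_image_of_mem _ (Finset.mem_filter.2 ⟨Finset.mem_univ _, hi⟩)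

lemma Ci_card (hinv : InvariantP ε X Xs i c Ci) (hik : i < k) : Ci.card ≤ i := by
  obtain ⟨hCi, -, -⟩ := hinv
  rw [hCi]
  refine le_trans Finset.card_image_le (le_of_eq ?_)
  have : Finset.univ.filter (fun r : Fin k => r.val < i) = Finset.Iio (⟨i, hik⟩ : Fin k) := by
    ext r; simp [Fin.lt_def]
  rw [this, Fin.card_Iio]

/-- (b): `ε·Δ₁(X_j) ≤ m_j · Φ(C_i, {μ_j})` for an uncovered cluster `j`. -/
lemma cluster_far (hd : 1 ≤ d) (hε0 : 0 < ε) (hirr : KIrreducible k ε X)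
    (hopt : IsOptPartition k X Xs) (hi : 1 ≤ i) (hik : i < k)
    (hinv : InvariantP ε X Xs i c Ci) {j : Fin k} (hij : i ≤ j.val) :
    ε * Delta1 (Xs j) ≤ ((Xs j).card : ℝ) * Phi Ci {ctr (Xs j)} := by
  obtain ⟨hne, hdisj, hunion, hsum⟩ := hopt
  obtain ⟨hCi, hgood, hpos⟩ := hinv
  have hCine : Ci.Nonempty := Ci_nonempty ⟨hCi, hgood, hpos⟩ hi hik
  set R2 := Phi Ci {ctr (Xs j)} with hR2
  set m : ℝ := ((Xs j).card : ℝ) with hm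
  obtain ⟨cst, hcst, hcsteq⟩ := Phi_exists_min hCine (ctr (Xs j))
  set F : Finset (Fin k) := (Finset.univ.filter (fun l : Fin k => ¬ l.val < i)).erase j with hF
  set C2 : Finset (Pt d) := Ci ∪ Finset.image (fun l => ctr (Xs l)) F with hC2
  have hC2ne : C2.Nonempty := hCine.mono Finset.subset_union_left
  have hcard : C2.card ≤ k - 1 := by
    have h1 : (Finset.univ.filter (fun l : Fin k => ¬ l.val < i)).card = k - i := by
      rw [Finset.filter_not, Finset.card_sdiff_of_subset (Finset.filter_subset _ _)]
      congr 1
      · simp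
      · have : Finset.univ.filter (fun r : Fin k => r.val < i) = Finset.Iio (⟨i, hik⟩ : Fin k) := by
          ext r; simp [Fin.lt_def]
        rw [this, Fin.card_Iio]
    have hjF : j ∈ Finset.univ.filter (fun l : Fin k => ¬ l.val < i) :=
      Finset.mem_filter.2 ⟨Finset.mem_univ j, not_lt.2 hij⟩
    have h2 : F.card = k - i - 1 := by
      rw [hF, Finset.card_erase_of_mem hjF, h1]
    calc C2.card ≤ Ci.card + (Finset.image (fun l => ctr (Xs l)) F).card :=
          Finset.card_union_le _ _
      _ ≤ i + (k - i - 1) := add_le_add (Ci_card ⟨hCi, hgood, hpos⟩ hik)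
          (le_trans Finset.card_image_le (le_of_eq h2))
      _ ≤ k - 1 := by omega
  have hDle : DeltaK (k - 1) X ≤ Phi C2 X := DeltaK_le hd hC2ne hcard X
  have hsplit : Phi C2 X = ∑ l, Phi C2 (Xs l) := by
    rw [← hunion, Phi, Finset.sum_biUnion (fun a _ b _ hab => hdisj a b hab)]
    rfl
  have hnotji : ¬ (j.val < i) := not_lt.2 hij
  have step : ∀ l, Phi C2 (Xs l) ≤ Delta1 (Xs l)
      + (if l.val < i then (ε / 16) * Delta1 (Xs l) else 0)
      + (if l = j then m * R2 else 0) := by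
    intro l
    by_cases hl : l.val < i
    · have hlj : l ≠ j := fun h => hnotji (h ▸ hl)
      rw [if_pos hl, if_neg hlj, add_zero]
      have hcl : c l ∈ C2 := Finset.mem_union_left _ (by
        rw [hCi]; exact Finset.mem_image_of_mem _ (Finset.mem_filter.2 ⟨Finset.mem_univ _, hl⟩))
      calc Phi C2 (Xs l) ≤ Phi {c l} (Xs l) := Phi_le_center hcl _
        _ ≤ (1 + ε / 16) * Delta1 (Xs l) := hgood l hl
        _ = Delta1 (Xs l) + (ε / 16) * Delta1 (Xs l) := by ring
    · rw [if_neg hl, add_zero]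
      by_cases hlj : l = j
      · subst hlj
        rw [if_pos rfl]
        have hcst2 : cst ∈ C2 := Finset.mem_union_left _ hcst
        calc Phi C2 (Xs l) ≤ Phi {cst} (Xs l) := Phi_le_center hcst2 _
          _ = Delta1 (Xs l) + m * ‖ctr (Xs l) - cst‖ ^ 2 := Phi_center_eq (hne l) _
          _ = Delta1 (Xs l) + m * R2 := by
              rw [hR2, hcsteq]
      · rw [if_neg hlj, add_zero]
        have : ctr (Xs l) ∈ C2 := Finset.mem_union_right _ (Finset.mem_image_of_mem _
          (Finset.mem_erase.2 ⟨hlj, Finset.mem_filter.2 ⟨Finset.mem_univ _, hl⟩⟩))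
        exact Phi_le_center this _
  have hsum_bound : Phi C2 X ≤ (∑ l, Delta1 (Xs l))
      + (ε / 16) * (∑ l ∈ Finset.univ.filter (fun l : Fin k => l.val < i), Delta1 (Xs l))
      + m * R2 := by
    rw [hsplit]
    calc ∑ l, Phi C2 (Xs l) ≤ ∑ l, (Delta1 (Xs l)
        + (if l.val < i then (ε / 16) * Delta1 (Xs l) else 0)
        + (if l = j then m * R2 else 0)) := Finset.sum_le_sum fun l _ => step l
      _ = _ := by
        rw [Finset.sum_add_distrib, Finset.sum_add_distrib, Finset.sum_ite_eq' Finset.univ j]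
        rw [← Finset.sum_filter, Finset.mul_sum]
        simp [Finset.mul_sum]
  have hfilter_le : ∑ l ∈ Finset.univ.filter (fun l : Fin k => l.val < i), Delta1 (Xs l)
      ≤ (∑ l, Delta1 (Xs l)) - Delta1 (Xs j) := by
    have hsub : Finset.univ.filter (fun l : Fin k => l.val < i) ⊆ Finset.univ.erase j := by
      intro l hl
      rcases Finset.mem_filter.1 hl with ⟨-, hl⟩
      exact Finset.mem_erase.2 ⟨fun h => hnotji (h ▸ hl), Finset.mem_univ l⟩
    calc ∑ l ∈ Finset.univ.filter (fun l : Fin k => l.val < i), Delta1 (Xs l)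
        ≤ ∑ l ∈ Finset.univ.erase j, Delta1 (Xs l) :=
          Finset.sum_le_sum_of_subset_of_nonneg hsub (fun l _ _ => Delta1_nonneg _)
      _ = (∑ l, Delta1 (Xs l)) - Delta1 (Xs j) := by
          rw [← Finset.sum_erase_add Finset.univ _ (Finset.mem_univ j)]; ring
  have h1 : (1 + ε) * DeltaK k X ≤ DeltaK (k - 1) X := hirr
  have hDj : Delta1 (Xs j) ≤ ∑ l, Delta1 (Xs l) :=
    Finset.single_le_sum (fun l _ => Delta1_nonneg (Xs l)) (Finset.mem_univ j)
  have hD0 : 0 ≤ Delta1 (Xs j) := Delta1_nonneg _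
  have hfilter0 : 0 ≤ ∑ l ∈ Finset.univ.filter (fun l : Fin k => l.val < i), Delta1 (Xs l) :=
    Finset.sum_nonneg fun l _ => Delta1_nonneg _
  rw [← hsum] at h1
  nlinarith [hDle, hsum_bound, hfilter_le, hDj, hD0, hfilter0]

set_option maxHeartbeats 1000000 in
/-- (c): every point of an uncovered cluster has cost at least `Φ(C_i,{μ_j})/9`. -/
lemma point_cost_lb (hd : 1 ≤ d) (hε0 : 0 < ε) (hirr : KIrreducible k ε X)
    (hopt : IsOptPartition k X Xs) (hi : 1 ≤ i) (hik : i < k)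
    (hinv : InvariantP ε X Xs i c Ci) {j : Fin k} (hij : i ≤ j.val)
    {y : Pt d} (hy : y ∈ Xs j) :
    Phi Ci {ctr (Xs j)} ≤ 9 * Phi Ci {y} := by
  obtain ⟨hCi, hgood, hpos⟩ := hinv
  have hCine : Ci.Nonempty := Ci_nonempty ⟨hCi, hgood, hpos⟩ hi hik
  obtain ⟨c', hc', hc'eq⟩ := Phi_exists_min hCine y
  obtain ⟨r, hr, hrc⟩ : ∃ r : Fin k, r.val < i ∧ c r = c' := by
    rw [hCi] at hc'
    obtain ⟨r, hrmem, hrc⟩ := Finset.mem_image.1 hc'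
    exact ⟨r, (Finset.mem_filter.1 hrmem).2, hrc⟩
  have hjr : j ≠ r := fun h => (not_lt.2 hij) (h ▸ hr)
  set μj := ctr (Xs j) with hμj
  set μr := ctr (Xs r) with hμr
  set t := dist y c' with ht
  set s := dist y μj with hs
  set e := dist μr c' with he
  set D := dist μr μj with hD
  set P := dist μj c' with hP
  have hmr : (0 : ℝ) < ((Xs r).card : ℝ) := by
    have := hopt.1 r
    exact_mod_cast this.card_pos
  -- e² ≤ D²/16
  have hinv_r : Phi {c r} (Xs r) ≤ (1 + ε / 16) * Delta1 (Xs r) := hgood r hr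
  have hce : Phi {c r} (Xs r) = Delta1 (Xs r) + ((Xs r).card : ℝ) * ‖μr - c r‖ ^ 2 :=
    Phi_center_eq (hopt.1 r) _
  have he2 : ((Xs r).card : ℝ) * e ^ 2 ≤ (ε / 16) * Delta1 (Xs r) := by
    have h' := hinv_r
    rw [hce] at h'
    have hnorm : ‖μr - c r‖ = e := by rw [hrc, he, dist_eq_norm]
    rw [hnorm] at h'
    linarith
  have hmerge : ε * Delta1 (Xs r) ≤ ((Xs r).card : ℝ) * D ^ 2 := by
    have := merge_bound hd hε0 hirr hopt hjr
    have hnd : ‖μr - μj‖ = D := by rw [hD, dist_eq_norm]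
    rwa [hnd] at this
  have heD : 4 * e ≤ D := by
    have h16 : ((Xs r).card : ℝ) * (16 * e ^ 2) ≤ ((Xs r).card : ℝ) * D ^ 2 := by
      nlinarith [he2, hmerge]
    have h16' : 16 * e ^ 2 ≤ D ^ 2 := le_of_mul_le_mul_left (by linarith [h16]) hmr
    nlinarith [dist_nonneg.trans_eq he.symm, dist_nonneg.trans_eq hD.symm, h16']
  -- triangle inequalities
  have htri1 : D ≤ e + P := dist_triangle μr c' μj |>.trans (by rw [dist_comm c' μj])
  have heP : 3 * e ≤ P := by linarith
  have hswap : s ≤ dist y μr := by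
    have := swap_lemma hd hopt hjr hy
    rwa [← dist_eq_norm, ← dist_eq_norm] at this
  have hstep : s ≤ t + e := by
    calc s ≤ dist y μr := hswap
      _ ≤ dist y c' + dist c' μr := dist_triangle _ _ _
      _ = t + e := by rw [dist_comm c' μr]
  have hPst : P ≤ s + t := by
    calc P ≤ dist μj y + dist y c' := dist_triangle _ _ _
      _ = s + t := by rw [dist_comm μj y]
  have hPt : P ≤ 3 * t := by linarith
  have hR2P : Phi Ci {μj} ≤ P ^ 2 := by
    have := Phi_pt_le hc' μj
    rwa [← dist_eq_norm] at this
  have ht2 : Phi Ci {y} = t ^ 2 := by rw [hc'eq, ht, dist_eq_norm]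
  have hP0 : 0 ≤ P := dist_nonneg
  have ht0 : 0 ≤ t := dist_nonneg
  nlinarith [hR2P, hPt, hP0, ht0, ht2]

set_option maxHeartbeats 1000000 in
/-- Mass of the good set `Y_j`: at least `(ε/32)·Φ(C_i, X_j)`. -/
lemma mass_lb (hd : 1 ≤ d) (hε0 : 0 < ε) (hε : ε ≤ 1 / 2) (hirr : KIrreducible k ε X)
    (hopt : IsOptPartition k X Xs) (hi : 1 ≤ i) (hik : i < k)
    (hinv : InvariantP ε X Xs i c Ci) {j : Fin k} (hij : i ≤ j.val) :
    (ε / 32) * Phi Ci (Xs j) ≤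
      ∑ y ∈ (Xs j).filter
        (fun y => Phi Ci {y} ≤ (2 / ((Xs j).card : ℝ)) * Phi Ci (Xs j)), Phi Ci {y} := by
  have hCine : Ci.Nonempty := Ci_nonempty hinv hi hik
  set A := Phi Ci (Xs j) with hA
  set R2 := Phi Ci {ctr (Xs j)} with hR2
  set m : ℝ := ((Xs j).card : ℝ) with hm
  set Y := (Xs j).filter (fun y => Phi Ci {y} ≤ (2 / m) * A) with hY
  set Z := (Xs j).filter (fun y => ¬ (Phi Ci {y} ≤ (2 / m) * A)) with hZ
  have hmpos : (0 : ℝ) < m := by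
    rw [hm]
    exact_mod_cast (hopt.1 j).card_pos
  have hA0 : (0 : ℝ) ≤ A := Phi_nonneg _ _
  have hR20 : (0 : ℝ) ≤ R2 := Phi_nonneg _ _
  -- upper bound on A
  obtain ⟨cst, hcst, hcsteq⟩ := Phi_exists_min hCine (ctr (Xs j))
  have hAub : A ≤ Delta1 (Xs j) + m * R2 := by
    calc A ≤ Phi {cst} (Xs j) := Phi_le_center hcst _
      _ = Delta1 (Xs j) + m * ‖ctr (Xs j) - cst‖ ^ 2 := Phi_center_eq (hopt.1 j) _
      _ = Delta1 (Xs j) + m * R2 := by rw [hR2, hcsteq]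
  have hfar : ε * Delta1 (Xs j) ≤ m * R2 := cluster_far hd hε0 hirr hopt hi hik hinv hij
  -- cardinality of Z
  have hZle : (Z.card : ℝ) * ((2 / m) * A) ≤ A := by
    have h1 : ∀ z ∈ Z, (2 / m) * A ≤ Phi Ci {z} := by
      intro z hz
      exact le_of_not_ge (Finset.mem_filter.1 hz).2
    have h2 : (Z.card : ℝ) * ((2 / m) * A) ≤ ∑ z ∈ Z, Phi Ci {z} := by
      have := Finset.card_nsmul_le_sum Z (fun z => Phi Ci {z}) ((2 / m) * A) h1
      simpa [nsmul_eq_mul] using this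
    have h3 : ∑ z ∈ Z, Phi Ci {z} ≤ A := by
      rw [hA, Phi_eq_sum_pts]
      exact Finset.sum_le_sum_of_subset_of_nonneg (Finset.filter_subset _ _)
        (fun x _ _ => Phi_nonneg _ _)
    linarith
  have hZcard : (Z.card : ℝ) ≤ m / 2 := by
    rcases le_or_gt A 0 with h | h
    · -- A ≤ 0, so A = 0 and Z is empty-ish; each z has Phi > 0 ≥ ... derive Z = ∅
      have hAz : A = 0 := le_antisymm h hA0
      have hz0 : ∀ x ∈ Xs j, Phi Ci {x} = 0 := by
        have hsum0 : ∑ x ∈ Xs j, Phi Ci {x} = 0 := by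
          rw [← Phi_eq_sum_pts]; exact hAz
        exact fun x hx =>
          (Finset.sum_eq_zero_iff_of_nonneg (fun x _ => Phi_nonneg Ci {x})).1 hsum0 x hx
      have : Z = ∅ := by
        rw [hZ]
        refine Finset.filter_eq_empty_iff.2 fun {z} hz => ?_
        push_neg
        rw [hAz, mul_zero, hz0 z hz]
      rw [this]
      simp
      positivity
    · have key : (Z.card : ℝ) * 2 * A ≤ A * m := by
        have h' := mul_le_mul_of_nonneg_right hZle hmpos.le
        calc (Z.card : ℝ) * 2 * A = (Z.card : ℝ) * (2 / m * A) * m := by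
              field_simp
          _ ≤ A * m := h'
      nlinarith [key, h]
  have hYZ : (Y.card : ℝ) + (Z.card : ℝ) = m := by
    rw [hY, hZ, hm]
    exact_mod_cast congrArg (Nat.cast (R := ℝ))
      (Finset.card_filter_add_card_filter_not (s := Xs j)
        (p := fun y => Phi Ci {y} ≤ (2 / m) * A))
  have hYcard : m / 2 ≤ (Y.card : ℝ) := by linarith
  -- each point of Y has cost ≥ R2/9
  have hYlb : ∀ y ∈ Y, R2 / 9 ≤ Phi Ci {y} := by
    intro y hy
    have := point_cost_lb hd hε0 hirr hopt hi hik hinv hij (Finset.mem_filter.1 hy).1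
    rw [← hR2] at this
    linarith
  have hSY : (Y.card : ℝ) * (R2 / 9) ≤ ∑ y ∈ Y, Phi Ci {y} := by
    have := Finset.card_nsmul_le_sum Y (fun y => Phi Ci {y}) (R2 / 9) hYlb
    simpa [nsmul_eq_mul] using this
  have hD10 : 0 ≤ Delta1 (Xs j) := Delta1_nonneg _
  have hYc0 : (0 : ℝ) ≤ (Y.card : ℝ) := Nat.cast_nonneg _
  have hmR20 : 0 ≤ m * R2 := mul_nonneg hmpos.le hR20
  have h1 : ε * A ≤ ε * Delta1 (Xs j) + ε * (m * R2) := by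
    have := mul_le_mul_of_nonneg_left hAub hε0.le
    linarith [this]
  have h2 : ε * (m * R2) ≤ (1 / 2) * (m * R2) := mul_le_mul_of_nonneg_right hε hmR20
  have h3 : (m / 2) * R2 ≤ (Y.card : ℝ) * R2 := mul_le_mul_of_nonneg_right hYcard hR20
  have hS0 : 0 ≤ ∑ y ∈ Y, Phi Ci {y} :=
    Finset.sum_nonneg fun y _ => Phi_nonneg _ _
  linarith [hSY, h1, h2, h3, hfar, hS0]

end Key


set_option maxHeartbeats 1600000 in
/-- Under the invariant `P(i)` (clusters reindexed so the covered clusters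
are `X₁, …, X_i`), let `S` consist of `N = ⌈2¹²·k³/ε²⌉` independent `D²`-samples from `X`
w.r.t. `C_i` (a sample `s : Fin N → X` has probability `∏_t Φ(C_i,{s t})/Φ(C_i,X)`).
With `J = {j ∈ {i+1,…,k} : Φ(C_i, X_j) ≥ (ε/(8k))·Φ(C_i, X)}` and
`Y_j = {y ∈ X_j : Φ(C_i,{y}) ≤ (2/m_j)·Φ(C_i, X_j)}`, the probability that some `j ∈ J`
has no point of `Y_j` in `S` is at most `1/(4k)`. -/
theorem stmt_12 {d k : ℕ} (ε : ℝ) (hε0 : 0 < ε) (hε : ε ≤ 1 / 2)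
    (X : Finset (Pt d)) (hirr : KIrreducible k ε X)
    (Xs : Fin k → Finset (Pt d)) (hopt : IsOptPartition k X Xs)
    (i : ℕ) (hi : 1 ≤ i) (hik : i < k)
    (c : Fin k → Pt d) (Ci : Finset (Pt d)) (hinv : InvariantP ε X Xs i c Ci)
    (N : ℕ) (hN : N = ⌈(2 ^ 12 * k ^ 3 : ℝ) / ε ^ 2⌉₊) :
    ∑ s ∈ (Finset.univ : Finset (Fin N → {x // x ∈ X})).filter
        (fun s => ∃ j : Fin k, i ≤ j.val ∧
          (ε / (8 * k)) * Phi Ci X ≤ Phi Ci (Xs j) ∧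
          ∀ t : Fin N, ¬((s t : Pt d) ∈ Xs j ∧
            Phi Ci {(s t : Pt d)} ≤ (2 / ((Xs j).card : ℝ)) * Phi Ci (Xs j))),
      ∏ t : Fin N, (Phi Ci {(s t : Pt d)} / Phi Ci X) ≤
    1 / (4 * k) := by
  classical
  have hΦX : 0 < Phi Ci X := hinv.2.2
  have hk2 : 2 ≤ k := lt_of_le_of_lt hi hik
  have hkR : (2 : ℝ) ≤ (k : ℝ) := by exact_mod_cast hk2
  have hkpos : (0 : ℝ) < (k : ℝ) := by linarith
  -- the dimension is positive
  have hd : 1 ≤ d := by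
    by_contra hd0
    have hd0 : d = 0 := by omega
    subst hd0
    obtain ⟨x0, hx0⟩ := hopt.1 ⟨0, by omega⟩
    obtain ⟨x1, hx1⟩ := hopt.1 ⟨1, by omega⟩
    have hne01 : (⟨0, by omega⟩ : Fin k) ≠ ⟨1, by omega⟩ := by
      simp [Fin.ext_iff]
    have hdisj := hopt.2.1 _ _ hne01
    have hxx : x0 = x1 := by
      ext t
      exact absurd t.2 (Nat.not_lt_zero _)
    exact (Finset.disjoint_left.1 hdisj hx0) (hxx ▸ hx1)
  set S := {x // x ∈ X}
  set g : S → ℝ := fun x => Phi Ci {(x : Pt d)} / Phi Ci X with hgdef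
  have hg0 : ∀ x, 0 ≤ g x := fun x => div_nonneg (Phi_nonneg _ _) hΦX.le
  have hgsum : ∑ x : S, g x = 1 := by
    rw [hgdef, ← Finset.sum_div]
    rw [Finset.sum_coe_sort X (fun y => Phi Ci {y})]
    rw [← Phi_eq_sum_pts, div_self hΦX.ne']
  set p : (Fin N → S) → ℝ := fun s => ∏ t, g (s t) with hpdef
  have hp0 : ∀ s, 0 ≤ p s := fun s => Finset.prod_nonneg fun t _ => hg0 _
  set q0 : ℝ := ε ^ 2 / (256 * k) with hq0def
  have hq0pos : 0 < q0 := by positivity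
  have hq0le : q0 ≤ 1 / 2 := by
    rw [hq0def]
    rw [div_le_iff₀ (by positivity)]
    nlinarith
  -- the per-cluster events
  set Ej : Fin k → (Fin N → S) → Prop := fun j s =>
    i ≤ j.val ∧ (ε / (8 * k)) * Phi Ci X ≤ Phi Ci (Xs j) ∧
      ∀ t : Fin N, ¬((s t : Pt d) ∈ Xs j ∧
        Phi Ci {(s t : Pt d)} ≤ (2 / ((Xs j).card : ℝ)) * Phi Ci (Xs j)) with hEjdef
  -- single-cluster bound
  have hperj : ∀ j : Fin k,
      ∑ s ∈ Finset.univ.filter (Ej j), p s ≤ (1 - q0) ^ N := by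
    intro j
    by_cases hcond : i ≤ j.val ∧ (ε / (8 * k)) * Phi Ci X ≤ Phi Ci (Xs j)
    · -- main case
      set B : Finset S := Finset.univ.filter (fun x : S => (x : Pt d) ∈ Xs j ∧
        Phi Ci {(x : Pt d)} ≤ (2 / ((Xs j).card : ℝ)) * Phi Ci (Xs j)) with hBdef
      have hsubset : Finset.univ.filter (Ej j) ⊆
          Fintype.piFinset (fun _ : Fin N => Bᶜ) := by
        intro s hs
        rw [Fintype.mem_piFinset]
        intro t
        simp only [Finset.mem_compl, hBdef, Finset.mem_filter, Finset.mem_univ, true_and]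
        exact (Finset.mem_filter.1 hs).2.2.2 t
      have hstep1 : ∑ s ∈ Finset.univ.filter (Ej j), p s ≤
          ∑ s ∈ Fintype.piFinset (fun _ : Fin N => Bᶜ), p s :=
        Finset.sum_le_sum_of_subset_of_nonneg hsubset (fun s _ _ => hp0 s)
      have hstep2 : ∑ s ∈ Fintype.piFinset (fun _ : Fin N => Bᶜ), p s
          = (∑ x ∈ Bᶜ, g x) ^ N := (Finset.sum_pow' Bᶜ g N).symm
      -- mass of B
      have hXsub : Xs j ⊆ X := by
        intro y hy
        rw [← hopt.2.2.1]
        exact Finset.mem_biUnion.2 ⟨j, Finset.mem_univ j, hy⟩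
      have hmass : (ε / 32) * Phi Ci (Xs j) ≤
          ∑ y ∈ (Xs j).filter (fun y => Phi Ci {y} ≤
            (2 / ((Xs j).card : ℝ)) * Phi Ci (Xs j)), Phi Ci {y} :=
        mass_lb hd hε0 hε hirr hopt hi hik hinv hcond.1
      have hBsum : ∑ x ∈ B, Phi Ci {(x : Pt d)} =
          ∑ y ∈ (Xs j).filter (fun y => Phi Ci {y} ≤
            (2 / ((Xs j).card : ℝ)) * Phi Ci (Xs j)), Phi Ci {y} := by
        rw [hBdef, Finset.sum_filter]
        rw [Finset.sum_coe_sort X (fun y => if y ∈ Xs j ∧ Phi Ci {y} ≤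
          (2 / ((Xs j).card : ℝ)) * Phi Ci (Xs j) then Phi Ci {y} else 0)]
        rw [← Finset.sum_filter]
        congr 1
        ext y
        simp only [Finset.mem_filter]
        constructor
        · rintro ⟨-, hy, hc⟩; exact ⟨hy, hc⟩
        · rintro ⟨hy, hc⟩; exact ⟨hXsub hy, hy, hc⟩
      have hqB : q0 ≤ ∑ x ∈ B, g x := by
        have h1 : ∑ x ∈ B, g x = (∑ x ∈ B, Phi Ci {(x : Pt d)}) / Phi Ci X := by
          rw [hgdef, ← Finset.sum_div]
        rw [h1, hBsum, hq0def, le_div_iff₀ hΦX]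
        calc ε ^ 2 / (256 * k) * Phi Ci X
            = (ε / 32) * ((ε / (8 * k)) * Phi Ci X) := by ring
          _ ≤ (ε / 32) * Phi Ci (Xs j) := by
              have := hcond.2
              nlinarith
          _ ≤ _ := hmass
      have hB1 : ∑ x ∈ B, g x ≤ 1 := by
        rw [← hgsum]
        exact Finset.sum_le_sum_of_subset_of_nonneg (Finset.subset_univ B)
          (fun x _ _ => hg0 x)
      have hcompl : ∑ x ∈ Bᶜ, g x = 1 - ∑ x ∈ B, g x := by
        have := Finset.sum_add_sum_compl B g
        rw [hgsum] at this
        linarith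
      calc ∑ s ∈ Finset.univ.filter (Ej j), p s ≤ (∑ x ∈ Bᶜ, g x) ^ N :=
            le_of_le_of_eq hstep1 hstep2
        _ ≤ (1 - q0) ^ N := by
            rw [hcompl]
            exact pow_le_pow_left₀ (by linarith) (by linarith) N
    · -- event is empty
      have : Finset.univ.filter (Ej j) = ∅ := by
        refine Finset.filter_eq_empty_iff.2 fun {s} _ => ?_
        rw [hEjdef]
        rintro ⟨h1, h2, -⟩
        exact hcond ⟨h1, h2⟩
      rw [this, Finset.sum_empty]
      exact pow_nonneg (by linarith) N
  -- union bound
  have hunion : ∑ s ∈ (Finset.univ : Finset (Fin N → S)).filter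
      (fun s => ∃ j : Fin k, Ej j s), p s ≤ ∑ j : Fin k, (1 - q0) ^ N := by
    calc ∑ s ∈ Finset.univ.filter (fun s => ∃ j : Fin k, Ej j s), p s
        ≤ ∑ s ∈ Finset.univ.filter (fun s => ∃ j : Fin k, Ej j s),
            ∑ j : Fin k, (if Ej j s then p s else 0) := by
          refine Finset.sum_le_sum fun s hs => ?_
          obtain ⟨j0, hj0⟩ := (Finset.mem_filter.1 hs).2
          have hnn : ∀ j ∈ (Finset.univ : Finset (Fin k)),
              (0 : ℝ) ≤ if Ej j s then p s else 0 := by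
            intro j _
            split
            · exact hp0 s
            · exact le_rfl
          have hsingle := Finset.single_le_sum hnn (Finset.mem_univ j0)
          simp only [if_pos hj0] at hsingle
          exact hsingle
      _ = ∑ j : Fin k, ∑ s ∈ Finset.univ.filter (fun s => ∃ j : Fin k, Ej j s),
            (if Ej j s then p s else 0) := Finset.sum_comm
      _ ≤ ∑ j : Fin k, ∑ s ∈ (Finset.univ : Finset (Fin N → S)),
            (if Ej j s then p s else 0) := by
          refine Finset.sum_le_sum fun j _ => ?_
          refine Finset.sum_le_sum_of_subset_of_nonneg (Finset.filter_subset _ _) ?_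
          intro s _ _
          split
          · exact hp0 s
          · exact le_rfl
      _ = ∑ j : Fin k, ∑ s ∈ Finset.univ.filter (Ej j), p s := by
          refine Finset.sum_congr rfl fun j _ => ?_
          rw [Finset.sum_filter]
      _ ≤ ∑ j : Fin k, (1 - q0) ^ N := Finset.sum_le_sum fun j _ => hperj j
  -- numeric bound
  have hNge : (2 ^ 12 * (k : ℝ) ^ 3 / ε ^ 2) ≤ (N : ℝ) := by
    rw [hN]; exact Nat.le_ceil _
  have hNq : 16 * (k : ℝ) ^ 2 ≤ (N : ℝ) * q0 := by
    have h1 : (2 ^ 12 * (k : ℝ) ^ 3 / ε ^ 2) * q0 ≤ (N : ℝ) * q0 :=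
      mul_le_mul_of_nonneg_right hNge hq0pos.le
    have h2 : (2 ^ 12 * (k : ℝ) ^ 3 / ε ^ 2) * q0 = 16 * (k : ℝ) ^ 2 := by
      rw [hq0def]
      field_simp
      ring
    linarith
  have hpow_exp : (1 - q0) ^ N ≤ Real.exp (-q0) ^ N :=
    pow_le_pow_left₀ (by linarith) (by linarith [Real.add_one_le_exp (-q0)]) N
  have hexp_eq : Real.exp (-q0) ^ N = Real.exp (-((N : ℝ) * q0)) := by
    rw [← Real.exp_nat_mul]
    ring_nf
  have hexp_le : Real.exp (-((N : ℝ) * q0)) ≤ 1 / (4 * (k : ℝ) ^ 2) := by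
    rw [Real.exp_neg, one_div]
    have h4 : (0 : ℝ) < 4 * (k : ℝ) ^ 2 := by positivity
    have hle : 4 * (k : ℝ) ^ 2 ≤ Real.exp ((N : ℝ) * q0) := by
      have := Real.add_one_le_exp ((N : ℝ) * q0)
      nlinarith [sq_nonneg (k : ℝ)]
    exact inv_anti₀ h4 hle
  calc ∑ s ∈ (Finset.univ : Finset (Fin N → S)).filter
        (fun s => ∃ j : Fin k, Ej j s), p s
      ≤ ∑ j : Fin k, (1 - q0) ^ N := hunion
    _ = (k : ℝ) * (1 - q0) ^ N := by
        rw [Finset.sum_const, Finset.card_univ, Fintype.card_fin, nsmul_eq_mul]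
    _ ≤ (k : ℝ) * (1 / (4 * (k : ℝ) ^ 2)) := by
        refine mul_le_mul_of_nonneg_left ?_ hkpos.le
        calc (1 - q0) ^ N ≤ Real.exp (-q0) ^ N := hpow_exp
          _ = Real.exp (-((N : ℝ) * q0)) := hexp_eq
          _ ≤ 1 / (4 * (k : ℝ) ^ 2) := hexp_le
    _ = 1 / (4 * (k : ℝ)) := by field_simp
end
end

section
/- Let 0 < ε ≤ 1/2, let X ⊆ ℝ^d be finite and (k,ε)-irreducible with optimal k-means partition X₁,…,X_k, let 1 ≤ i < k, and let C_i be a set of i centers satisfying the invariant P(i). Let j ∈ {i+1,…,k} be any index with Φ(C_i,X_j) ≥ (ε/(4k))·Φ(C_i,X) (such an index exists). If S consists of at least 2¹²·k²/ε² independent D²-samples from X w.r.t. C_i, then with probability at least 1 − 1/(16k), at least 2⁶·k/ε of the samples lie in X_j. -/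
open Finset
open scoped BigOperators
open Classical

noncomputable section

lemma sInf_img_nonneg {d : ℕ} (C : Finset (Pt d)) (x : Pt d) :
    0 ≤ sInf ((fun c => ‖x - c‖ ^ 2) '' (C : Set (Pt d))) := by
  apply Real.sInf_nonneg
  rintro y ⟨c, -, rfl⟩; positivity

lemma phi_nonneg {d : ℕ} (C X : Finset (Pt d)) : 0 ≤ Phi C X :=
  Finset.sum_nonneg fun x _ => sInf_img_nonneg C x

lemma phi_singleton {d : ℕ} (C : Finset (Pt d)) (x : Pt d) :
    Phi C {x} = sInf ((fun c => ‖x - c‖ ^ 2) '' (C : Set (Pt d))) := by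
  simp [Phi]

lemma phi_sum {d : ℕ} (C X : Finset (Pt d)) : Phi C X = ∑ x ∈ X, Phi C {x} := by
  simp [Phi, phi_singleton]

lemma phi_mono {d : ℕ} {C C' : Finset (Pt d)} (h : C ⊆ C') (hC : C.Nonempty)
    (X : Finset (Pt d)) : Phi C' X ≤ Phi C X := by
  apply Finset.sum_le_sum
  intro x _
  apply csInf_le_csInf
  · exact ⟨0, by rintro y ⟨c, -, rfl⟩; positivity⟩
  · exact Set.image_nonempty.2 (by exact_mod_cast hC.to_set)
  · exact Set.image_mono (by exact_mod_cast h)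

lemma phi_le_single {d : ℕ} {C : Finset (Pt d)} {c : Pt d} (hc : c ∈ C)
    (X : Finset (Pt d)) : Phi C X ≤ Phi {c} X := by
  apply phi_mono (by simpa using hc) ⟨c, by simp⟩

lemma deltaK_le {d : ℕ} {m : ℕ} {C : Finset (Pt d)} (h : C.card = m) (X : Finset (Pt d)) :
    DeltaK m X ≤ Phi C X := by
  apply csInf_le
  · exact ⟨0, by rintro y ⟨D, -, rfl⟩; exact phi_nonneg D X⟩
  · exact ⟨C, h, rfl⟩

lemma phi_zero_of_d_zero {C X : Finset (Pt 0)} : Phi C X = 0 := by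
  apply Finset.sum_eq_zero
  intro x _
  rcases C.eq_empty_or_nonempty with rfl | ⟨c, hc⟩
  · simp
  · have : ((fun c => ‖x - c‖ ^ 2) '' (C : Set (Pt 0))) = {0} := by
      apply Set.eq_singleton_iff_nonempty_unique_mem.2
      refine ⟨⟨_, ⟨c, hc, rfl⟩⟩, ?_⟩
      rintro y ⟨c', -, rfl⟩
      have : x = c' := Subsingleton.elim x c'
      simp [this]
    rw [this]; exact csInf_singleton 0

lemma infinite_pt (d : ℕ) (hd : d ≠ 0) : Infinite (Pt d) := by
  have h1 : Nonempty (Fin d) := ⟨⟨0, Nat.pos_of_ne_zero hd⟩⟩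
  have : Infinite (Fin d → ℝ) := inferInstance
  exact @Infinite.of_injective (Pt d) (Fin d → ℝ) this (WithLp.toLp 2) (WithLp.toLp_injective 2)

lemma part1 {d k : ℕ} (ε : ℝ) (hε0 : 0 < ε) (hε : ε ≤ 1 / 2)
    (X : Finset (Pt d)) (hirr : KIrreducible k ε X)
    (Xs : Fin k → Finset (Pt d)) (hopt : IsOptPartition k X Xs)
    (i : ℕ) (hi : 1 ≤ i) (hik : i < k)
    (c : Fin k → Pt d) (Ci : Finset (Pt d)) (hinv : InvariantP ε X Xs i c Ci) :
    ∃ j : Fin k, i ≤ j.val ∧ (ε / (4 * k)) * Phi Ci X ≤ Phi Ci (Xs j) := by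
  by_contra hcon
  push_neg at hcon
  obtain ⟨hCi, hgood, hpos⟩ := hinv
  obtain ⟨hne, hdisj, hunion, hsum⟩ := hopt
  have hk0 : 0 < k := lt_of_le_of_lt (Nat.zero_le i) hik
  have hd : d ≠ 0 := by
    rintro rfl
    rw [phi_zero_of_d_zero] at hpos
    exact lt_irrefl 0 hpos
  haveI := infinite_pt d hd
  have hCine : Ci.Nonempty := by
    rw [hCi]
    exact ⟨c ⟨0, hk0⟩, Finset.mem_image.2 ⟨⟨0, hk0⟩, Finset.mem_filter.2 ⟨Finset.mem_univ _, hi⟩, rfl⟩⟩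
  have hcard : Ci.card ≤ k - 1 := by
    rw [hCi]
    calc (Finset.image c (Finset.univ.filter (fun r : Fin k => r.val < i))).card
        ≤ (Finset.univ.filter (fun r : Fin k => r.val < i)).card := Finset.card_image_le
      _ ≤ (Finset.range i).card := by
          apply Finset.card_le_card_of_injOn (fun r => r.val)
          · intro r hr; simpa using (Finset.mem_filter.1 hr).2
          · intro a _ b _ h; exact Fin.val_injective h
      _ = i := Finset.card_range i
      _ ≤ k - 1 := Nat.le_sub_one_of_lt hik
  obtain ⟨C', hsub, hC'card⟩ := Infinite.exists_superset_card_eq Ci (k - 1) hcard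
  have hDk1 : DeltaK (k - 1) X ≤ Phi Ci X :=
    le_trans (deltaK_le hC'card X) (phi_mono hsub hCine X)
  have hIrr : (1 + ε) * DeltaK k X ≤ Phi Ci X := le_trans hirr hDk1
  have hsplit : Phi Ci X = ∑ j : Fin k, Phi Ci (Xs j) := by
    rw [← hunion, Phi, Finset.sum_biUnion (fun a _ b _ hab => hdisj a b hab)]
    rfl
  set P := Phi Ci X with hP
  set D := DeltaK k X with hD
  have hcov : ∑ r ∈ Finset.univ.filter (fun r : Fin k => r.val < i), Phi Ci (Xs r)
      ≤ (1 + ε / 16) * D := by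
    have h1 : ∀ r ∈ Finset.univ.filter (fun r : Fin k => r.val < i),
        Phi Ci (Xs r) ≤ (1 + ε / 16) * Delta1 (Xs r) := by
      intro r hr
      have hri : r.val < i := by simpa using (Finset.mem_filter.1 hr).2
      have hmem : c r ∈ Ci := by
        rw [hCi]; exact Finset.mem_image.2 ⟨r, Finset.mem_filter.2 ⟨Finset.mem_univ _, hri⟩, rfl⟩
      exact le_trans (phi_le_single hmem (Xs r)) (hgood r hri)
    calc ∑ r ∈ Finset.univ.filter (fun r : Fin k => r.val < i), Phi Ci (Xs r)
        ≤ ∑ r ∈ Finset.univ.filter (fun r : Fin k => r.val < i), (1 + ε / 16) * Delta1 (Xs r) :=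
          Finset.sum_le_sum h1
      _ = (1 + ε / 16) * ∑ r ∈ Finset.univ.filter (fun r : Fin k => r.val < i), Delta1 (Xs r) :=
          (Finset.mul_sum _ _ _).symm
      _ ≤ (1 + ε / 16) * ∑ r : Fin k, Delta1 (Xs r) := by
          apply mul_le_mul_of_nonneg_left _ (by linarith)
          apply Finset.sum_le_sum_of_subset_of_nonneg (Finset.filter_subset _ _)
          intro r _ _; exact phi_nonneg _ _
      _ = (1 + ε / 16) * D := by rw [hsum]
  have huncov : ∑ r ∈ Finset.univ.filter (fun r : Fin k => ¬ r.val < i), Phi Ci (Xs r)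
      < (k : ℝ) * (ε / (4 * k) * P) := by
    have hnonempty : (Finset.univ.filter (fun r : Fin k => ¬ r.val < i)).Nonempty :=
      ⟨⟨i, hik⟩, Finset.mem_filter.2 ⟨Finset.mem_univ _, by simp⟩⟩
    calc ∑ r ∈ Finset.univ.filter (fun r : Fin k => ¬ r.val < i), Phi Ci (Xs r)
        < ∑ _r ∈ Finset.univ.filter (fun r : Fin k => ¬ r.val < i), ε / (4 * k) * P := by
          apply Finset.sum_lt_sum_of_nonempty hnonempty
          intro r hr
          exact hcon r (Nat.le_of_not_lt (by simpa using (Finset.mem_filter.1 hr).2))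
      _ = ((Finset.univ.filter (fun r : Fin k => ¬ r.val < i)).card : ℝ) * (ε / (4 * k) * P) := by
          rw [Finset.sum_const, nsmul_eq_mul]
      _ ≤ (k : ℝ) * (ε / (4 * k) * P) := by
          apply mul_le_mul_of_nonneg_right
          · exact_mod_cast le_trans (Finset.card_filter_le _ _) (le_of_eq (Finset.card_univ.trans (Fintype.card_fin k)))
          · positivity
  have hkR : (0 : ℝ) < k := by exact_mod_cast hk0
  have hsplit2 : P = (∑ r ∈ Finset.univ.filter (fun r : Fin k => r.val < i), Phi Ci (Xs r))
      + ∑ r ∈ Finset.univ.filter (fun r : Fin k => ¬ r.val < i), Phi Ci (Xs r) := by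
    rw [hsplit, Finset.sum_filter_add_sum_filter_not]
  have hkterm : (k : ℝ) * (ε / (4 * k) * P) = ε / 4 * P := by
    field_simp
  rw [hkterm] at huncov
  have hmain : P < (1 + ε / 16) * D + ε / 4 * P := by linarith
  have hDpos : 0 < D := by nlinarith
  have h2 : (1 - ε / 4) * ((1 + ε) * D) ≤ (1 - ε / 4) * P :=
    mul_le_mul_of_nonneg_left hIrr (by linarith)
  nlinarith [mul_pos hDpos hε0, mul_pos (mul_pos hDpos hε0) hε0]

section cheb
variable {α : Type*} [Fintype α] {N : ℕ}

lemma master (N : ℕ) (g : Fin N → α → ℝ) :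
    ∑ s : Fin N → α, ∏ t, g t (s t) = ∏ t, ∑ a, g t a := by
  rw [Finset.prod_univ_sum]
  rw [Fintype.piFinset_univ]

variable (w : α → ℝ) (f : α → ℝ)

lemma E_one (hw1 : ∑ a, w a = 1) (t₀ : Fin N) :
    ∑ s : Fin N → α, (∏ t, w (s t)) * f (s t₀) = ∑ a, w a * f a := by
  have h1 : ∀ s : Fin N → α, (∏ t, w (s t)) * f (s t₀)
      = ∏ t, (w (s t) * (if t = t₀ then f (s t) else 1)) := by
    intro s
    rw [Finset.prod_mul_distrib, Finset.prod_ite_eq' Finset.univ t₀ (fun t => f (s t))]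
    simp
  simp only [h1]
  rw [master N (fun t a => w a * (if t = t₀ then f a else 1))]
  have h2 : ∀ t : Fin N, (∑ a, w a * (if t = t₀ then f a else 1))
      = if t = t₀ then (∑ a, w a * f a) else 1 := by
    intro t
    by_cases ht : t = t₀ <;> simp [ht, hw1]
  simp only [h2]
  rw [Finset.prod_ite_eq' Finset.univ t₀ (fun _ => ∑ a, w a * f a)]
  simp

lemma E_two (hw1 : ∑ a, w a = 1) (t₀ t₁ : Fin N) (hne : t₀ ≠ t₁) :
    ∑ s : Fin N → α, (∏ t, w (s t)) * (f (s t₀) * f (s t₁))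
      = (∑ a, w a * f a) * (∑ a, w a * f a) := by
  have h1 : ∀ s : Fin N → α, (∏ t, w (s t)) * (f (s t₀) * f (s t₁))
      = ∏ t, (w (s t) * ((if t = t₀ then f (s t) else 1) * (if t = t₁ then f (s t) else 1))) := by
    intro s
    rw [Finset.prod_mul_distrib, Finset.prod_mul_distrib,
      Finset.prod_ite_eq' Finset.univ t₀ (fun t => f (s t)),
      Finset.prod_ite_eq' Finset.univ t₁ (fun t => f (s t))]
    simp
  simp only [h1]
  rw [master N (fun t a => w a * ((if t = t₀ then f a else 1) * (if t = t₁ then f a else 1)))]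
  have h2 : ∀ t : Fin N, (∑ a, w a * ((if t = t₀ then f a else 1) * (if t = t₁ then f a else 1)))
      = (if t = t₀ then (∑ a, w a * f a) else 1) * (if t = t₁ then (∑ a, w a * f a) else 1) := by
    intro t
    by_cases h0 : t = t₀
    · subst h0
      simp [hne, hw1]
    · by_cases h1 : t = t₁ <;> simp [h0, h1, hw1, hne.symm]
  simp only [h2]
  rw [Finset.prod_mul_distrib,
    Finset.prod_ite_eq' Finset.univ t₀ (fun _ => ∑ a, w a * f a),
    Finset.prod_ite_eq' Finset.univ t₁ (fun _ => ∑ a, w a * f a)]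
  simp
end cheb

section cheb2
variable {α : Type*} [Fintype α]

lemma chebyshev (w : α → ℝ) (hw0 : ∀ a, 0 ≤ w a) (hw1 : ∑ a, w a = 1)
    (p : α → Prop) [DecidablePred p] (q : ℝ) (hq : ∑ a ∈ Finset.univ.filter p, w a = q)
    (N : ℕ) (θ : ℝ) (hθ : 0 < θ) (h16 : 16 * θ ≤ (N : ℝ) * q) :
    1 - 256 / 225 * (1 / ((N : ℝ) * q)) ≤
      ∑ s ∈ (Finset.univ : Finset (Fin N → α)).filter
          (fun s => θ ≤ ((Finset.univ.filter (fun t : Fin N => p (s t))).card : ℝ)),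
        ∏ t, w (s t) := by
  classical
  set f : α → ℝ := fun a => if p a then 1 else 0 with hfdef
  have hf : ∀ a, f a * f a = f a := by
    intro a; by_cases h : p a <;> simp [hfdef, h]
  have hq' : ∑ a, w a * f a = q := by
    rw [← hq, Finset.sum_filter]
    apply Finset.sum_congr rfl
    intro a _
    by_cases h : p a <;> simp [hfdef, h]
  have hq0 : 0 ≤ q := by
    rw [← hq]; exact Finset.sum_nonneg fun a _ => hw0 a
  have hP0 : ∀ s : Fin N → α, 0 ≤ ∏ t, w (s t) :=
    fun s => Finset.prod_nonneg fun t _ => hw0 (s t)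
  have htot : ∑ s : Fin N → α, ∏ t, w (s t) = 1 := by
    rw [master N (fun _ a => w a)]
    simp [hw1]
  -- S s as a real sum
  set S : (Fin N → α) → ℝ := fun s => ∑ t, f (s t) with hSdef
  have hcardS : ∀ s : Fin N → α,
      ((Finset.univ.filter (fun t : Fin N => p (s t))).card : ℝ) = S s := by
    intro s
    rw [Finset.card_filter]
    push_cast
    rfl
  have hES : ∑ s : Fin N → α, (∏ t, w (s t)) * S s = (N : ℝ) * q := by
    simp only [hSdef, Finset.mul_sum]
    rw [Finset.sum_comm]
    have : ∀ t : Fin N, ∑ s : Fin N → α, (∏ u, w (s u)) * f (s t) = q :=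
      fun t => (E_one w f hw1 t).trans hq'
    simp [this]
  have key : ∀ t u : Fin N, ∑ s : Fin N → α, (∏ v, w (s v)) * (f (s t) * f (s u))
      = if t = u then q else q * q := by
    intro t u
    by_cases h : t = u
    · subst h
      simp only [hf, if_pos rfl]
      exact (E_one w f hw1 t).trans hq'
    · rw [if_neg h]
      rw [E_two w f hw1 t u h, hq']
  have hES2 : ∑ s : Fin N → α, (∏ t, w (s t)) * (S s * S s)
      = (N : ℝ) * q + ((N : ℝ) ^ 2 - N) * (q * q) := by
    have expand : ∀ s : Fin N → α, (∏ t, w (s t)) * (S s * S s)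
        = ∑ t, ∑ u, (∏ v, w (s v)) * (f (s t) * f (s u)) := by
      intro s
      rw [hSdef]
      rw [Finset.sum_mul_sum]
      rw [Finset.mul_sum]
      apply Finset.sum_congr rfl
      intro t _
      rw [Finset.mul_sum]
    simp only [expand]
    rw [Finset.sum_comm]
    have swap2 : ∀ t : Fin N, ∑ s : Fin N → α, ∑ u, (∏ v, w (s v)) * (f (s t) * f (s u))
        = ∑ u, ∑ s : Fin N → α, (∏ v, w (s v)) * (f (s t) * f (s u)) := fun t => Finset.sum_comm
    simp only [swap2, key]
    have inner : ∀ t : Fin N, (∑ u : Fin N, if t = u then q else q * q)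
        = q - q * q + (N : ℝ) * (q * q) := by
      intro t
      have hsplit : ∀ u : Fin N, (if t = u then q else q * q)
          = (if t = u then q - q * q else 0) + q * q := by
        intro u; by_cases h : t = u <;> simp [h]
      simp only [hsplit, Finset.sum_add_distrib, Finset.sum_ite_eq, Finset.mem_univ,
        if_true, Finset.sum_const, Finset.card_univ, Fintype.card_fin, nsmul_eq_mul]
    simp only [inner, Finset.sum_const, Finset.card_univ, Fintype.card_fin, nsmul_eq_mul]
    ring
  -- variance bound
  have hVar : ∑ s : Fin N → α, (∏ t, w (s t)) * (S s - (N : ℝ) * q) ^ 2 ≤ (N : ℝ) * q := by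
    have expand : ∀ s : Fin N → α, (∏ t, w (s t)) * (S s - (N : ℝ) * q) ^ 2
        = (∏ t, w (s t)) * (S s * S s) - 2 * ((N : ℝ) * q) * ((∏ t, w (s t)) * S s)
          + ((N : ℝ) * q) ^ 2 * (∏ t, w (s t)) := by
      intro s; ring
    simp only [expand]
    rw [Finset.sum_add_distrib, Finset.sum_sub_distrib, ← Finset.mul_sum, ← Finset.mul_sum,
      hES2, hES, htot]
    have : (0 : ℝ) ≤ (N : ℝ) * (q * q) := by positivity
    nlinarith [this]
  -- the tail bound
  set M : ℝ := (N : ℝ) * q with hM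
  have hMpos : 0 < M := lt_of_lt_of_le (by linarith) h16
  set Fail : Finset (Fin N → α) := (Finset.univ : Finset (Fin N → α)).filter
      (fun s => ¬ θ ≤ ((Finset.univ.filter (fun t : Fin N => p (s t))).card : ℝ)) with hFail
  have hFail0 : 0 ≤ ∑ s ∈ Fail, ∏ t, w (s t) :=
    Finset.sum_nonneg fun s _ => hP0 s
  have hFailVar : (M - θ) ^ 2 * ∑ s ∈ Fail, ∏ t, w (s t) ≤ M := by
    rw [Finset.mul_sum]
    calc ∑ s ∈ Fail, (M - θ) ^ 2 * ∏ t, w (s t)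
        ≤ ∑ s ∈ Fail, (∏ t, w (s t)) * (S s - M) ^ 2 := by
          apply Finset.sum_le_sum
          intro s hs
          have hSs : S s < θ := by
            have := (Finset.mem_filter.1 hs).2
            rw [hcardS s] at this
            linarith [not_le.1 this]
          have h1 : 0 ≤ M - θ := by linarith
          have h2 : M - θ ≤ M - S s := by linarith
          have h3 : (M - θ) ^ 2 ≤ (S s - M) ^ 2 := by nlinarith
          calc (M - θ) ^ 2 * ∏ t, w (s t) ≤ (S s - M) ^ 2 * ∏ t, w (s t) :=
                mul_le_mul_of_nonneg_right h3 (hP0 s)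
            _ = (∏ t, w (s t)) * (S s - M) ^ 2 := mul_comm _ _
      _ ≤ ∑ s : Fin N → α, (∏ t, w (s t)) * (S s - M) ^ 2 := by
          apply Finset.sum_le_sum_of_subset_of_nonneg (Finset.filter_subset _ _)
          intro s _ _; exact mul_nonneg (hP0 s) (sq_nonneg _)
      _ ≤ M := hVar
  have hFailSmall : ∑ s ∈ Fail, ∏ t, w (s t) ≤ 256 / 225 * (1 / M) := by
    have h15 : 15 / 16 * M ≤ M - θ := by linarith
    have h15' : 0 < 15 / 16 * M := by linarith
    have hsq : (15 / 16 * M) ^ 2 ≤ (M - θ) ^ 2 := by nlinarith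
    have h1 : (15 / 16 * M) ^ 2 * ∑ s ∈ Fail, ∏ t, w (s t) ≤ M :=
      le_trans (mul_le_mul_of_nonneg_right hsq hFail0) hFailVar
    rw [mul_one_div, le_div_iff₀ hMpos]
    nlinarith [h1, hMpos, mul_pos hMpos hMpos]
  have hcompl : ∑ s ∈ (Finset.univ : Finset (Fin N → α)).filter
      (fun s => θ ≤ ((Finset.univ.filter (fun t : Fin N => p (s t))).card : ℝ)), ∏ t, w (s t)
      = 1 - ∑ s ∈ Fail, ∏ t, w (s t) := by
    rw [hFail, eq_sub_iff_add_eq, Finset.sum_filter_add_sum_filter_not, htot]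
  rw [hcompl]
  linarith
end cheb2


/-- Under the invariant `P(i)` (clusters reindexed so the covered clusters
are `X₁, …, X_i`), there exists an uncovered index `j ∈ {i+1,…,k}` with
`Φ(C_i, X_j) ≥ (ε/(4k))·Φ(C_i, X)`; and for any such `j`, if `S` consists of
`N ≥ 2¹²·k²/ε²` independent `D²`-samples from `X` w.r.t. `C_i`, then with probability at
least `1 − 1/(16k)` at least `2⁶·k/ε` of the samples lie in `X_j`. -/
theorem stmt_17 {d k : ℕ} (ε : ℝ) (hε0 : 0 < ε) (hε : ε ≤ 1 / 2)
    (X : Finset (Pt d)) (hirr : KIrreducible k ε X)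
    (Xs : Fin k → Finset (Pt d)) (hopt : IsOptPartition k X Xs)
    (i : ℕ) (hi : 1 ≤ i) (hik : i < k)
    (c : Fin k → Pt d) (Ci : Finset (Pt d)) (hinv : InvariantP ε X Xs i c Ci) :
    (∃ j : Fin k, i ≤ j.val ∧ (ε / (4 * k)) * Phi Ci X ≤ Phi Ci (Xs j)) ∧
    (∀ j : Fin k, i ≤ j.val → (ε / (4 * k)) * Phi Ci X ≤ Phi Ci (Xs j) →
      ∀ N : ℕ, (2 ^ 12 * k ^ 2 / ε ^ 2 : ℝ) ≤ (N : ℝ) →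
        1 - 1 / (16 * k) ≤
          ∑ s ∈ (Finset.univ : Finset (Fin N → {x // x ∈ X})).filter
              (fun s => (2 ^ 6 * k / ε : ℝ) ≤
                ((Finset.univ.filter (fun t : Fin N => (s t : Pt d) ∈ Xs j)).card : ℝ)),
            ∏ t : Fin N, (Phi Ci {(s t : Pt d)} / Phi Ci X)) := by
  obtain ⟨hCi, hgood, hpos⟩ := hinv
  obtain ⟨hne, hdisj, hunion, hsum⟩ := hopt
  have hk0 : 0 < k := lt_of_le_of_lt (Nat.zero_le i) hik
  have hK0 : (0 : ℝ) < (k : ℝ) := by exact_mod_cast hk0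
  refine ⟨part1 ε hε0 hε X hirr Xs ⟨hne, hdisj, hunion, hsum⟩ i hi hik c Ci
    ⟨hCi, hgood, hpos⟩, ?_⟩
  intro j hj hPhij N hN
  have hXsub : Xs j ⊆ X := by
    rw [← hunion]; intro x hx; exact Finset.mem_biUnion.2 ⟨j, Finset.mem_univ _, hx⟩
  have hw0 : ∀ a : {x // x ∈ X}, 0 ≤ Phi Ci {(a : Pt d)} / Phi Ci X :=
    fun a => div_nonneg (phi_nonneg _ _) hpos.le
  have hw1 : ∑ a : {x // x ∈ X}, Phi Ci {(a : Pt d)} / Phi Ci X = 1 := by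
    rw [← Finset.sum_div, Finset.sum_coe_sort X (fun x => Phi Ci {x}), ← phi_sum,
      div_self (ne_of_gt hpos)]
  have hq : ∑ a ∈ Finset.univ.filter (fun a : {x // x ∈ X} => (a : Pt d) ∈ Xs j),
      Phi Ci {(a : Pt d)} / Phi Ci X = Phi Ci (Xs j) / Phi Ci X := by
    rw [Finset.sum_filter,
      Finset.sum_coe_sort X (fun x => if x ∈ Xs j then Phi Ci {x} / Phi Ci X else 0),
      ← Finset.sum_filter]
    have hfil : X.filter (fun x => x ∈ Xs j) = Xs j := by
      ext x
      simp only [Finset.mem_filter]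
      exact ⟨fun h => h.2, fun h => ⟨hXsub h, h⟩⟩
    rw [hfil, ← Finset.sum_div, ← phi_sum]
  have hql : ε / (4 * (k : ℝ)) ≤ Phi Ci (Xs j) / Phi Ci X := by
    rw [le_div_iff₀ hpos]; exact hPhij
  have hθ : (0 : ℝ) < 2 ^ 6 * (k : ℝ) / ε := by positivity
  have h16 : 16 * (2 ^ 6 * (k : ℝ) / ε) ≤ (N : ℝ) * (Phi Ci (Xs j) / Phi Ci X) := by
    have h1 : (2 ^ 12 * (k : ℝ) ^ 2 / ε ^ 2) * (ε / (4 * (k : ℝ)))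
        ≤ (N : ℝ) * (Phi Ci (Xs j) / Phi Ci X) :=
      mul_le_mul hN hql (by positivity) (Nat.cast_nonneg N)
    have h2 : (2 ^ 12 * (k : ℝ) ^ 2 / ε ^ 2) * (ε / (4 * (k : ℝ)))
        = 2 ^ 10 * (k : ℝ) / ε := by
      field_simp; ring
    rw [h2] at h1
    have h3 : (16 : ℝ) * (2 ^ 6 * (k : ℝ) / ε) = 2 ^ 10 * (k : ℝ) / ε := by ring
    rw [h3]; exact h1
  have main := chebyshev (fun a : {x // x ∈ X} => Phi Ci {(a : Pt d)} / Phi Ci X)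
    hw0 hw1 (fun a : {x // x ∈ X} => (a : Pt d) ∈ Xs j)
    (Phi Ci (Xs j) / Phi Ci X) hq N (2 ^ 6 * (k : ℝ) / ε) hθ h16
  have hNq2 : 2048 * (k : ℝ) ≤ (N : ℝ) * (Phi Ci (Xs j) / Phi Ci X) := by
    have h5 : 2048 * (k : ℝ) ≤ 16 * (2 ^ 6 * (k : ℝ) / ε) := by
      rw [show (16 : ℝ) * (2 ^ 6 * (k : ℝ) / ε) = 1024 * (k : ℝ) / ε by ring,
        le_div_iff₀ hε0]
      nlinarith [mul_le_mul_of_nonneg_left hε (le_of_lt hK0)]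
    linarith
  have hNqpos : (0 : ℝ) < (N : ℝ) * (Phi Ci (Xs j) / Phi Ci X) := by linarith
  have h2' : 1 / ((N : ℝ) * (Phi Ci (Xs j) / Phi Ci X)) ≤ 1 / (2048 * (k : ℝ)) :=
    one_div_le_one_div_of_le (by positivity) hNq2
  have h3 : 256 / 225 * (1 / ((N : ℝ) * (Phi Ci (Xs j) / Phi Ci X)))
      ≤ 256 / 225 * (1 / (2048 * (k : ℝ))) :=
    mul_le_mul_of_nonneg_left h2' (by norm_num)
  have h4 : 256 / 225 * (1 / (2048 * (k : ℝ))) ≤ 1 / (16 * (k : ℝ)) := by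
    rw [mul_one_div, div_le_div_iff₀ (by positivity) (by positivity)]
    nlinarith [hK0.le]
  have hfin : 1 - 1 / (16 * (k : ℝ)) ≤
      1 - 256 / 225 * (1 / ((N : ℝ) * (Phi Ci (Xs j) / Phi Ci X))) := by linarith
  exact le_trans hfin main
end
end
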